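/- Let φ : [0,∞) → ℝ, ε > 0 and α ∈ (0,1] be such that sup_{x≥0} (1+x)^{0.5+ε}|φ(x)| < ∞ and sup_{x≥0, 0<δ<1} |(1+x+δ)^{0.5+ε} φ(x+δ) − (1+x)^{0.5+ε} φ(x)|/δ^α < ∞. Then there exists C < ∞ such that for all y ∈ [0,∞) and δ ∈ [0,1], ∫_0^∞ |(1+y+δ)^ε φ(y+δ+x) − (1+y)^ε φ(y+x)|² dx ≤ C δ^{2α}. -/

import Mathlib

open MeasureTheory

lemma rpow_diff_le (q : ℝ) {a b K : ℝ} (ha : 0 < a) (hab : a ≤ b)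
    (hK : ∀ t ∈ Set.Icc a b, |q * t ^ (q - 1)| ≤ K) :
    |b ^ q - a ^ q| ≤ K * (b - a) := by
  have h := Convex.norm_image_sub_le_of_norm_hasDerivWithin_le
    (f := fun t : ℝ => t ^ q) (f' := fun t : ℝ => q * t ^ (q - 1)) (s := Set.Icc a b)
    (fun t ht => (Real.hasDerivAt_rpow_const
      (Or.inl (lt_of_lt_of_le ha ht.1).ne')).hasDerivWithinAt)
    (fun t ht => by simpa only [Real.norm_eq_abs] using hK t ht)
    (convex_Icc a b) (Set.left_mem_Icc.2 hab) (Set.right_mem_Icc.2 hab)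
  simpa [Real.norm_eq_abs, abs_of_nonneg (sub_nonneg.2 hab)] using h

lemma lint_shift {u r : ℝ} (hu : 0 < u) (hr : r < -1) :
    ∫⁻ x in Set.Ioi (0:ℝ), ENNReal.ofReal ((u + x) ^ r)
      = ENNReal.ofReal (-u ^ (r + 1) / (r + 1)) := by
  have hpre : ((· + u) : ℝ → ℝ) ⁻¹' Set.Ioi u = Set.Ioi 0 := by
    ext x; simp
  have h1 : ∫⁻ x in Set.Ioi (0:ℝ), ENNReal.ofReal ((u + x) ^ r)
      = ∫⁻ x in Set.Ioi u, ENNReal.ofReal (x ^ r) := by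
    rw [← hpre]
    have h := (measurePreserving_add_right (volume : Measure ℝ) u).setLIntegral_comp_preimage_emb
      (MeasurableEquiv.addRight u).measurableEmbedding
      (fun x => ENNReal.ofReal (x ^ r)) (Set.Ioi u)
    rw [← h]
    apply lintegral_congr
    intro x
    rw [add_comm]
  rw [h1, ← ofReal_integral_eq_lintegral_ofReal (integrableOn_Ioi_rpow_of_lt hr hu) ?_,
    integral_Ioi_rpow_of_lt hr hu]
  filter_upwards [ae_restrict_mem measurableSet_Ioi] with x hx
  exact Real.rpow_nonneg (le_of_lt (hu.trans hx)) r

set_option maxHeartbeats 1000000 in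
theorem l2_holder_shift_bound (φ : ℝ → ℝ) (ε α : ℝ) (hε : 0 < ε)
    (hα0 : 0 < α) (hα1 : α ≤ 1)
    (hbdd : ∃ c : ℝ, ∀ x : ℝ, 0 ≤ x → (1 + x) ^ ((0.5:ℝ) + ε) * |φ x| ≤ c)
    (hholder : ∃ c : ℝ, ∀ x δ : ℝ, 0 ≤ x → 0 < δ → δ < 1 →
      |(1 + x + δ) ^ ((0.5:ℝ) + ε) * φ (x + δ) - (1 + x) ^ ((0.5:ℝ) + ε) * φ x|
        ≤ c * δ ^ α) :
    ∃ C : ℝ, ∀ y δ : ℝ, 0 ≤ y → 0 ≤ δ → δ ≤ 1 →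
      ∫⁻ x in Set.Ioi (0:ℝ), ENNReal.ofReal
          (((1 + y + δ) ^ ε * φ (y + δ + x) - (1 + y) ^ ε * φ (y + x)) ^ 2)
        ≤ ENNReal.ofReal (C * δ ^ (2 * α)) := by
  obtain ⟨c₁, h₁⟩ := hbdd
  obtain ⟨c₂, h₂⟩ := hholder
  set p : ℝ := (0.5:ℝ) + ε with hp
  have hp1 : 0 < p := by rw [hp]; norm_num; linarith
  have hc₁ : 0 ≤ c₁ := by
    have h := h₁ 0 le_rfl
    have h' : (0:ℝ) ≤ (1 + 0) ^ p * |φ 0| := by positivity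
    linarith
  have hc₂ : 0 ≤ c₂ := by
    have h := h₂ 0 (1/2) le_rfl (by norm_num) (by norm_num)
    have h2 : (0:ℝ) < (1/2 : ℝ) ^ α := Real.rpow_pos_of_pos (by norm_num) α
    nlinarith [abs_nonneg ((1 + 0 + 1/2) ^ p * φ (0 + 1/2) - (1 + 0) ^ p * φ 0)]
  have hψ : ∀ t : ℝ, 0 ≤ t → |(1 + t) ^ p * φ t| ≤ c₁ := by
    intro t ht
    have h1t : (0:ℝ) < 1 + t := by linarith
    rw [abs_mul, abs_of_pos (Real.rpow_pos_of_pos h1t p)]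
    exact h₁ t ht
  have hH : ∀ x δ : ℝ, 0 ≤ x → 0 < δ → δ ≤ 1 →
      |(1 + x + δ) ^ p * φ (x + δ) - (1 + x) ^ p * φ x| ≤ (c₂ + 2 * c₁) * δ ^ α := by
    intro x δ hx hδ hδ1
    rcases lt_or_eq_of_le hδ1 with h | h
    · refine (h₂ x δ hx hδ h).trans ?_
      nlinarith [Real.rpow_nonneg hδ.le α]
    · subst h
      rw [Real.one_rpow]
      have b1 := hψ (x + 1) (by linarith)
      have b2 := hψ x hx
      rw [show (1:ℝ) + (x + 1) = 1 + x + 1 by ring] at b1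
      have tri : |(1 + x + 1) ^ p * φ (x + 1) - (1 + x) ^ p * φ x|
          ≤ |(1 + x + 1) ^ p * φ (x + 1)| + |(1 + x) ^ p * φ x| := by
        simpa [sub_eq_add_neg] using abs_add_le ((1 + x + 1) ^ p * φ (x + 1)) (-((1 + x) ^ p * φ x))
      linarith
  refine ⟨((c₂ + 2 * c₁) + p * c₁ + ε * 2 ^ ε * c₁) ^ 2 * ((2:ℝ) ^ ε) ^ 2 / (2 * ε), ?_⟩
  intro y δ hy hδ0 hδ1
  set M : ℝ := (c₂ + 2 * c₁) + p * c₁ + ε * 2 ^ ε * c₁ with hM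
  have h2e : (1:ℝ) ≤ 2 ^ ε := by
    rw [show (1:ℝ) = 2 ^ (0:ℝ) by simp]
    exact Real.rpow_le_rpow_of_exponent_le one_le_two hε.le
  have hM0 : 0 ≤ M := by
    have t1 := mul_nonneg hp1.le hc₁
    have t2 := mul_nonneg (mul_nonneg hε.le (by linarith : (0:ℝ) ≤ 2 ^ ε)) hc₁
    rw [hM]; linarith
  rcases eq_or_lt_of_le hδ0 with h0 | h0
  · rw [← h0]
    simp
  -- now 0 < δ
  have hu0 : (0:ℝ) < 1 + y := by linarith
  have hu1 : (1:ℝ) ≤ 1 + y := by linarith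
  have hδα : δ ≤ δ ^ α := by
    nth_rewrite 1 [← Real.rpow_one δ]
    exact Real.rpow_le_rpow_of_exponent_ge h0 hδ1 hα1
  have hδα0 : 0 ≤ δ ^ α := Real.rpow_nonneg h0.le α
  have hvu : 1 + y + δ ≤ 2 * (1 + y) := by linarith
  have hv0 : (0:ℝ) < 1 + y + δ := by linarith
  have hveps : (1 + y + δ) ^ ε ≤ 2 ^ ε * (1 + y) ^ ε := by
    calc (1 + y + δ) ^ ε ≤ (2 * (1 + y)) ^ ε := Real.rpow_le_rpow hv0.le hvu hε.le
      _ = 2 ^ ε * (1 + y) ^ ε := Real.mul_rpow (by norm_num) hu0.le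
  have hue : |(1 + y + δ) ^ ε - (1 + y) ^ ε| ≤ ε * 2 ^ ε * (1 + y) ^ (ε - 1) * δ := by
    have hKb : ∀ t ∈ Set.Icc (1 + y) (1 + y + δ),
        |ε * t ^ (ε - 1)| ≤ ε * (2 ^ ε * (1 + y) ^ (ε - 1)) := by
      intro t ht
      have ht0 : 0 < t := lt_of_lt_of_le hu0 ht.1
      rw [abs_mul, abs_of_pos hε, abs_of_pos (Real.rpow_pos_of_pos ht0 _)]
      have hmain : t ^ (ε - 1) ≤ 2 ^ ε * (1 + y) ^ (ε - 1) := by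
        rcases le_or_gt ε 1 with hle | hlt
        · have hh1 : t ^ (ε - 1) ≤ (1 + y) ^ (ε - 1) :=
            Real.rpow_le_rpow_of_nonpos hu0 ht.1 (by linarith)
          nlinarith [Real.rpow_pos_of_pos hu0 (ε - 1)]
        · have hh1 : t ^ (ε - 1) ≤ (2 * (1 + y)) ^ (ε - 1) :=
            Real.rpow_le_rpow ht0.le (ht.2.trans hvu) (by linarith)
          rw [Real.mul_rpow (by norm_num) hu0.le] at hh1
          have hh2 : (2:ℝ) ^ (ε - 1) ≤ 2 ^ ε :=
            Real.rpow_le_rpow_of_exponent_le one_le_two (by linarith)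
          nlinarith [Real.rpow_pos_of_pos hu0 (ε - 1)]
      exact mul_le_mul_of_nonneg_left hmain hε.le
    have h := rpow_diff_le ε hu0 (by linarith : 1 + y ≤ 1 + y + δ) hKb
    rw [show (1 + y + δ) - (1 + y) = δ by ring] at h
    calc |(1 + y + δ) ^ ε - (1 + y) ^ ε| ≤ ε * (2 ^ ε * (1 + y) ^ (ε - 1)) * δ := h
      _ = ε * 2 ^ ε * (1 + y) ^ (ε - 1) * δ := by ring
  have key : ∀ x : ℝ, 0 ≤ x →
      |(1 + y + δ) ^ ε * φ (y + δ + x) - (1 + y) ^ ε * φ (y + x)|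
        ≤ M * (δ ^ α * ((2 ^ ε * (1 + y) ^ ε) * (1 + y + x) ^ (-p))) := by
    intro x hx
    have hA0 : (0:ℝ) < 1 + y + x := by linarith
    have hA1 : (1:ℝ) ≤ 1 + y + x := by linarith
    have hB0 : (0:ℝ) < 1 + y + x + δ := by linarith
    have hAp : (0:ℝ) < (1 + y + x) ^ (-p) := Real.rpow_pos_of_pos hA0 _
    have hBp : (0:ℝ) < (1 + y + x + δ) ^ (-p) := Real.rpow_pos_of_pos hB0 _
    have hvε : (0:ℝ) < (1 + y + δ) ^ ε := Real.rpow_pos_of_pos hv0 _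
    have hHa := hH (y + x) δ (by linarith) h0 hδ1
    rw [show y + x + δ = y + δ + x by ring,
        show (1:ℝ) + (y + x) + δ = 1 + y + x + δ by ring,
        show (1:ℝ) + (y + x) = 1 + y + x by ring] at hHa
    have hψa := hψ (y + x) (by linarith)
    rw [show (1:ℝ) + (y + x) = 1 + y + x by ring] at hψa
    set V : ℝ := (1 + y + δ) ^ ε with hV
    set U : ℝ := (1 + y) ^ ε with hU
    set Bp : ℝ := (1 + y + x + δ) ^ (-p) with hBpdef
    set Ap : ℝ := (1 + y + x) ^ (-p) with hApdef
    set D : ℝ := (1 + y + x + δ) ^ p * φ (y + δ + x) - (1 + y + x) ^ p * φ (y + x) with hD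
    set Pa : ℝ := (1 + y + x) ^ p * φ (y + x) with hPa
    have hBmul : Bp * (1 + y + x + δ) ^ p = 1 := by
      rw [hBpdef, ← Real.rpow_add hB0]; simp
    have hAmul : Ap * (1 + y + x) ^ p = 1 := by
      rw [hApdef, ← Real.rpow_add hA0]; simp
    have decomp : V * φ (y + δ + x) - U * φ (y + x)
        = V * Bp * D + V * (Bp - Ap) * Pa + (V - U) * (Ap * Pa) := by
      rw [hD, hPa]
      linear_combination (-(V * φ (y + δ + x))) * hBmul + (U * φ (y + x)) * hAmul
    have hT1 : |V * Bp * D| ≤ (c₂ + 2 * c₁) * (δ ^ α * (V * Ap)) := by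
      rw [abs_mul, abs_mul, abs_of_pos hvε, abs_of_pos hBp]
      have hBA : Bp ≤ Ap :=
        Real.rpow_le_rpow_of_nonpos hA0 (by linarith) (by linarith)
      calc V * Bp * |D| = V * (Bp * |D|) := by ring
        _ ≤ V * (Ap * ((c₂ + 2 * c₁) * δ ^ α)) := by
            apply mul_le_mul_of_nonneg_left _ hvε.le
            exact mul_le_mul hBA hHa (abs_nonneg _) hAp.le
        _ = (c₂ + 2 * c₁) * (δ ^ α * (V * Ap)) := by ring
    have hT2 : |V * (Bp - Ap) * Pa| ≤ p * c₁ * (δ ^ α * (V * Ap)) := by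
      rw [abs_mul, abs_mul, abs_of_pos hvε]
      have hKb2 : ∀ t ∈ Set.Icc (1 + y + x) (1 + y + x + δ),
          |(-p) * t ^ (-p - 1)| ≤ p * (1 + y + x) ^ (-p - 1) := by
        intro t ht
        have ht0 : 0 < t := lt_of_lt_of_le hA0 ht.1
        rw [abs_mul, abs_neg, abs_of_pos hp1, abs_of_pos (Real.rpow_pos_of_pos ht0 _)]
        exact mul_le_mul_of_nonneg_left
          (Real.rpow_le_rpow_of_nonpos hA0 ht.1 (by linarith)) hp1.le
      have hmvt := rpow_diff_le (-p) hA0 (by linarith : 1 + y + x ≤ 1 + y + x + δ) hKb2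
      rw [show (1 + y + x + δ) - (1 + y + x) = δ by ring] at hmvt
      have hstep : (1 + y + x) ^ (-p - 1) ≤ Ap :=
        Real.rpow_le_rpow_of_exponent_le hA1 (by linarith)
      have hm2 : |Bp - Ap| ≤ p * (1 + y + x) ^ (-p - 1) * δ := hmvt
      calc V * |Bp - Ap| * |Pa|
          ≤ V * (p * (1 + y + x) ^ (-p - 1) * δ) * c₁ := by
            apply mul_le_mul _ hψa (abs_nonneg _) _
            · exact mul_le_mul_of_nonneg_left hm2 hvε.le
            · have := Real.rpow_pos_of_pos hA0 (-p - 1)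
              positivity
        _ ≤ V * (p * Ap * δ ^ α) * c₁ := by
            apply mul_le_mul_of_nonneg_right _ hc₁
            apply mul_le_mul_of_nonneg_left _ hvε.le
            have h1 : (1 + y + x) ^ (-p - 1) * δ ≤ Ap * δ ^ α :=
              mul_le_mul hstep hδα h0.le hAp.le
            calc p * (1 + y + x) ^ (-p - 1) * δ = p * ((1 + y + x) ^ (-p - 1) * δ) := by ring
              _ ≤ p * (Ap * δ ^ α) := mul_le_mul_of_nonneg_left h1 hp1.le
              _ = p * Ap * δ ^ α := by ring
        _ = p * c₁ * (δ ^ α * (V * Ap)) := by ring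
    have hT3 : |(V - U) * (Ap * Pa)| ≤ ε * 2 ^ ε * c₁ * (δ ^ α * (V * Ap)) := by
      rw [abs_mul, abs_mul, abs_of_pos hAp]
      have hUV : U ≤ V := by
        rw [hU, hV]
        exact Real.rpow_le_rpow hu0.le (by linarith) hε.le
      have hstep : (1 + y) ^ (ε - 1) * δ ≤ V * δ ^ α := by
        have h1 : (1 + y) ^ (ε - 1) ≤ U := by
          rw [hU]
          exact Real.rpow_le_rpow_of_exponent_le hu1 (by linarith)
        have h2 : (1 + y) ^ (ε - 1) ≤ V := le_trans h1 hUV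
        exact mul_le_mul h2 hδα h0.le hvε.le
      calc |V - U| * (Ap * |Pa|)
          ≤ (ε * 2 ^ ε * (1 + y) ^ (ε - 1) * δ) * (Ap * c₁) := by
            apply mul_le_mul hue _ _ _
            · exact mul_le_mul_of_nonneg_left hψa hAp.le
            · positivity
            · have h2p : (0:ℝ) < 2 ^ ε := by linarith
              have h3 : (0:ℝ) < (1 + y) ^ (ε - 1) := Real.rpow_pos_of_pos hu0 _
              positivity
        _ ≤ (ε * 2 ^ ε * (V * δ ^ α)) * (Ap * c₁) := by
            apply mul_le_mul_of_nonneg_right _ (by positivity)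
            have h2p : (0:ℝ) ≤ ε * 2 ^ ε := by nlinarith
            calc ε * 2 ^ ε * (1 + y) ^ (ε - 1) * δ
                = (ε * 2 ^ ε) * ((1 + y) ^ (ε - 1) * δ) := by ring
              _ ≤ (ε * 2 ^ ε) * (V * δ ^ α) := mul_le_mul_of_nonneg_left hstep h2p
              _ = ε * 2 ^ ε * (V * δ ^ α) := by ring
        _ = ε * 2 ^ ε * c₁ * (δ ^ α * (V * Ap)) := by ring
    have habs : |V * φ (y + δ + x) - U * φ (y + x)|
        ≤ |V * Bp * D| + |V * (Bp - Ap) * Pa| + |(V - U) * (Ap * Pa)| := by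
      rw [decomp]
      exact (abs_add_le _ _).trans (add_le_add_left (abs_add_le _ _) _)
    have hMX : M * (δ ^ α * (V * Ap))
        = (c₂ + 2 * c₁) * (δ ^ α * (V * Ap)) + p * c₁ * (δ ^ α * (V * Ap))
          + ε * 2 ^ ε * c₁ * (δ ^ α * (V * Ap)) := by rw [hM]; ring
    have hXle : δ ^ α * (V * Ap) ≤ δ ^ α * ((2 ^ ε * (1 + y) ^ ε) * Ap) := by
      apply mul_le_mul_of_nonneg_left _ hδα0
      apply mul_le_mul_of_nonneg_right _ hAp.le
      rw [hV]; rw [hU] at hveps; exact hveps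
    calc |V * φ (y + δ + x) - U * φ (y + x)| ≤ M * (δ ^ α * (V * Ap)) := by linarith
      _ ≤ M * (δ ^ α * ((2 ^ ε * (1 + y) ^ ε) * Ap)) := mul_le_mul_of_nonneg_left hXle hM0
  -- integral computation
  have hr2 : -(2 * p) < -1 := by rw [hp]; norm_num; linarith
  have hKnn : (0:ℝ) ≤ (M * δ ^ α * (2 ^ ε * (1 + y) ^ ε)) ^ 2 := sq_nonneg _
  calc ∫⁻ x in Set.Ioi (0:ℝ), ENNReal.ofReal
        (((1 + y + δ) ^ ε * φ (y + δ + x) - (1 + y) ^ ε * φ (y + x)) ^ 2)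
      ≤ ∫⁻ x in Set.Ioi (0:ℝ), ENNReal.ofReal
        ((M * δ ^ α * (2 ^ ε * (1 + y) ^ ε)) ^ 2 * (1 + y + x) ^ (-(2 * p))) := by
        apply setLIntegral_mono' measurableSet_Ioi
        intro x hx
        apply ENNReal.ofReal_le_ofReal
        have hx0 : (0:ℝ) ≤ x := le_of_lt hx
        have hA0 : (0:ℝ) < 1 + y + x := by linarith
        have hk := key x hx0
        calc ((1 + y + δ) ^ ε * φ (y + δ + x) - (1 + y) ^ ε * φ (y + x)) ^ 2
            = |(1 + y + δ) ^ ε * φ (y + δ + x) - (1 + y) ^ ε * φ (y + x)| ^ 2 := (sq_abs _).symm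
          _ ≤ (M * (δ ^ α * ((2 ^ ε * (1 + y) ^ ε) * (1 + y + x) ^ (-p)))) ^ 2 :=
              pow_le_pow_left₀ (abs_nonneg _) hk 2
          _ = (M * δ ^ α * (2 ^ ε * (1 + y) ^ ε)) ^ 2 * ((1 + y + x) ^ (-p)) ^ 2 := by ring
          _ = (M * δ ^ α * (2 ^ ε * (1 + y) ^ ε)) ^ 2 * (1 + y + x) ^ (-(2 * p)) := by
              congr 1
              rw [← Real.rpow_natCast ((1 + y + x) ^ (-p)) 2, ← Real.rpow_mul hA0.le]
              congr 1
              push_cast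
              ring
    _ = ENNReal.ofReal ((M * δ ^ α * (2 ^ ε * (1 + y) ^ ε)) ^ 2)
          * ∫⁻ x in Set.Ioi (0:ℝ), ENNReal.ofReal ((1 + y + x) ^ (-(2 * p))) := by
        simp_rw [ENNReal.ofReal_mul hKnn]
        rw [lintegral_const_mul' _ _ ENNReal.ofReal_ne_top]
    _ = ENNReal.ofReal ((M * δ ^ α * (2 ^ ε * (1 + y) ^ ε)) ^ 2)
          * ENNReal.ofReal (-(1 + y) ^ (-(2 * p) + 1) / (-(2 * p) + 1)) := by
        rw [lint_shift hu0 hr2]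
    _ ≤ ENNReal.ofReal (M ^ 2 * ((2:ℝ) ^ ε) ^ 2 / (2 * ε) * δ ^ (2 * α)) := by
        rw [← ENNReal.ofReal_mul hKnn]
        apply ENNReal.ofReal_le_ofReal
        have he : -(2 * p) + 1 = -(2 * ε) := by rw [hp]; ring_nf
        rw [he, neg_div_neg_eq]
        have hd2 : (δ ^ α) ^ 2 = δ ^ (2 * α) := by
          rw [← Real.rpow_natCast (δ ^ α) 2, ← Real.rpow_mul h0.le]
          congr 1
          push_cast
          ring
        have hu2 : ((1 + y) ^ ε) ^ 2 * (1 + y) ^ (-(2 * ε)) = 1 := by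
          rw [← Real.rpow_natCast ((1 + y) ^ ε) 2, ← Real.rpow_mul hu0.le,
            ← Real.rpow_add hu0]
          rw [show (ε * (2:ℕ) + -(2 * ε) : ℝ) = 0 by push_cast; ring, Real.rpow_zero]
        apply le_of_eq
        calc (M * δ ^ α * (2 ^ ε * (1 + y) ^ ε)) ^ 2 * ((1 + y) ^ (-(2 * ε)) / (2 * ε))
            = (M ^ 2 * ((2:ℝ) ^ ε) ^ 2 / (2 * ε))
                * ((((1 + y) ^ ε) ^ 2 * (1 + y) ^ (-(2 * ε))) * (δ ^ α) ^ 2) := by ring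
          _ = M ^ 2 * ((2:ℝ) ^ ε) ^ 2 / (2 * ε) * δ ^ (2 * α) := by
              rw [hu2, one_mul, hd2]
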